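/- Interventional consistency of the Gaussian abstraction on X-interventions: with f(x₁,x₂,y₁,y₂)=(x₁+x₂, y₁+2y₂), the pushforward along f of the causal kernel K_{\{X₁,X₂\}}((x₁,x₂,y₁,y₂),·) = δ_{(x₁,x₂)} ⊗ N((3x₁+x₂, x₂), Id₂) equals L_X(f(x₁,x₂,y₁,y₂),·), where L_X((x,y),·) = δ_x ⊗ N(3x,5); i.e. both equal δ_{x₁+x₂} ⊗ N(3x₁+3x₂, 5). -/

import Mathlib

open MeasureTheory ProbabilityTheory

open Real
open scoped NNReal ENNReal

lemma exp_quad_eq {b : ℝ} (hb : 0 < b) (c d : ℝ) (x : ℝ) :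
    rexp (-b * x ^ 2 + c * x + d) =
      rexp (-b * (x - c / (2 * b)) ^ 2) * rexp (d + c ^ 2 / (4 * b)) := by
  rw [← Real.exp_add]; congr 1; field_simp; ring

lemma integrable_exp_quad {b : ℝ} (hb : 0 < b) (c d : ℝ) :
    Integrable (fun x : ℝ => rexp (-b * x ^ 2 + c * x + d)) := by
  simp_rw [exp_quad_eq hb c d]
  exact ((integrable_exp_neg_mul_sq hb).comp_sub_right (c / (2 * b))).mul_const _

lemma integral_exp_quad {b : ℝ} (hb : 0 < b) (c d : ℝ) :
    ∫ x : ℝ, rexp (-b * x ^ 2 + c * x + d) = √(π / b) * rexp (d + c ^ 2 / (4 * b)) := by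
  simp_rw [exp_quad_eq hb c d]
  rw [integral_mul_const, integral_sub_right_eq_self (fun x => rexp (-b * x ^ 2)) (c / (2 * b)),
    integral_gaussian]

lemma pdf_mul (m1 m2 t : ℝ) : (fun x => gaussianPDFReal m1 1 x * gaussianPDFReal m2 4 (t - x))
    = fun x => ((√(2 * π * 1))⁻¹ * (√(2 * π * 4))⁻¹) *
      rexp (-(5/8) * x ^ 2 + (m1 + (t - m2) / 4) * x + (-(m1 ^ 2) / 2 - (t - m2) ^ 2 / 8)) := by
  ext x
  simp only [gaussianPDFReal, NNReal.coe_one, NNReal.coe_ofNat]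
  rw [mul_mul_mul_comm, ← Real.exp_add]
  congr 1
  ring_nf

lemma pdf_conv (m1 m2 t : ℝ) :
    ∫ x, gaussianPDFReal m1 1 x * gaussianPDFReal m2 4 (t - x)
      = gaussianPDFReal (m1 + m2) 5 t := by
  rw [pdf_mul, integral_const_mul, integral_exp_quad (by norm_num : (0:ℝ) < 5/8)]
  rw [gaussianPDFReal]
  push_cast
  rw [← mul_assoc]
  congr 1
  · rw [← Real.sqrt_inv, ← Real.sqrt_inv, ← Real.sqrt_mul (by positivity),
      ← Real.sqrt_mul (by positivity), ← Real.sqrt_inv]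
    congr 1
    have : π ≠ 0 := pi_ne_zero
    field_simp
    ring_nf
  · congr 1
    ring_nf

lemma integrable_pdf_mul (m1 m2 t : ℝ) :
    Integrable (fun x => gaussianPDFReal m1 1 x * gaussianPDFReal m2 4 (t - x)) := by
  rw [pdf_mul]
  exact (integrable_exp_quad (by norm_num : (0:ℝ) < 5/8) _ _).const_mul _

lemma lintegral_pdf_conv (m1 m2 t : ℝ) :
    ∫⁻ x, gaussianPDF m1 1 x * gaussianPDF m2 4 (t - x) = gaussianPDF (m1 + m2) 5 t := by
  simp only [gaussianPDF_def]
  rw [← pdf_conv m1 m2 t,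
    ofReal_integral_eq_lintegral_ofReal (integrable_pdf_mul m1 m2 t)
      (ae_of_all _ fun x => mul_nonneg (gaussianPDFReal_nonneg _ _ _)
        (gaussianPDFReal_nonneg _ _ _))]
  congr 1
  ext x
  rw [ENNReal.ofReal_mul (gaussianPDFReal_nonneg _ _ _)]

lemma gaussian_conv (m1 m2 : ℝ) :
    Measure.map (fun z : ℝ × ℝ => z.1 + z.2) ((gaussianReal m1 1).prod (gaussianReal m2 4))
      = gaussianReal (m1 + m2) 5 := by
  have hadd : Measurable (fun z : ℝ × ℝ => z.1 + z.2) := measurable_fst.add measurable_snd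
  ext s hs
  rw [Measure.map_apply hadd hs, gaussianReal_apply _ (by norm_num : (5:ℝ≥0) ≠ 0),
    Measure.prod_apply (hadd hs)]
  have hq := measurable_gaussianPDF m2 4
  have hp := measurable_gaussianPDF m1 1
  have hind : Measurable (s.indicator (fun _ => (1:ℝ≥0∞))) := measurable_const.indicator hs
  have key : ∀ x : ℝ,
      gaussianReal m2 4 (Prod.mk x ⁻¹' ((fun z : ℝ × ℝ => z.1 + z.2) ⁻¹' s))
        = ∫⁻ y, gaussianPDF m2 4 ((y : ℝ) - x) * s.indicator (fun _ => (1:ℝ≥0∞)) y := by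
    intro x
    rw [gaussianReal_of_var_ne_zero _ (by norm_num : (4:ℝ≥0) ≠ 0),
      withDensity_apply _ (measurable_prodMk_left (hadd hs)),
      ← lintegral_indicator (measurable_prodMk_left (hadd hs)),
      ← lintegral_add_right_eq_self (fun y => gaussianPDF m2 4 (y - x) *
        s.indicator (fun _ => (1:ℝ≥0∞)) y) x]
    congr 1
    ext y
    by_cases h : x + y ∈ s
    · rw [Set.indicator_of_mem (show y ∈ Prod.mk x ⁻¹' ((fun z : ℝ × ℝ => z.1 + z.2) ⁻¹' s) from h),
        Set.indicator_of_mem (show y + x ∈ s by rwa [add_comm]), mul_one, add_sub_cancel_right]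
    · rw [Set.indicator_of_notMem (show y ∉ Prod.mk x ⁻¹' ((fun z : ℝ × ℝ => z.1 + z.2) ⁻¹' s) from h),
        Set.indicator_of_notMem (show y + x ∉ s by rwa [add_comm]), mul_zero]
  simp_rw [key]
  have hF : Measurable (Function.uncurry fun (x y : ℝ) =>
      gaussianPDF m2 4 (y - x) * s.indicator (fun _ => (1:ℝ≥0∞)) y) :=
    (hq.comp (measurable_snd.sub measurable_fst)).mul (hind.comp measurable_snd)
  rw [gaussianReal_of_var_ne_zero _ (by norm_num : (1:ℝ≥0) ≠ 0),
    lintegral_withDensity_eq_lintegral_mul _ hp hF.lintegral_prod_right]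
  simp only [Pi.mul_apply]
  have step1 : ∫⁻ x, gaussianPDF m1 1 x * ∫⁻ y, gaussianPDF m2 4 (y - x) *
        s.indicator (fun _ => (1:ℝ≥0∞)) y
      = ∫⁻ x, ∫⁻ y, gaussianPDF m1 1 x * gaussianPDF m2 4 (y - x) *
        s.indicator (fun _ => (1:ℝ≥0∞)) y := by
    refine lintegral_congr fun x => ?_
    rw [← lintegral_const_mul' _ _ (by simp [gaussianPDF_def] : gaussianPDF m1 1 x ≠ ⊤)]
    exact lintegral_congr fun y => by ring_nf
  rw [step1, lintegral_lintegral_swap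
    (((hp.comp measurable_fst).mul (hq.comp (measurable_snd.sub measurable_fst))).mul
      (hind.comp measurable_snd)).aemeasurable]
  have step2 : ∫⁻ y, ∫⁻ x, gaussianPDF m1 1 x * gaussianPDF m2 4 (y - x) *
        s.indicator (fun _ => (1:ℝ≥0∞)) y
      = ∫⁻ y, s.indicator (gaussianPDF (m1 + m2) 5) y := by
    refine lintegral_congr fun y => ?_
    rw [lintegral_mul_const' _ _ (by by_cases h : y ∈ s <;> simp [h] :
        s.indicator (fun _ => (1:ℝ≥0∞)) y ≠ ⊤), lintegral_pdf_conv]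
    by_cases h : y ∈ s
    · rw [Set.indicator_of_mem h, Set.indicator_of_mem h, mul_one]
    · rw [Set.indicator_of_notMem h, Set.indicator_of_notMem h, mul_zero]
  rw [step2, lintegral_indicator hs]

lemma main_map (x1 x2 : ℝ) :
    Measure.map (fun q : ℝ × ℝ × ℝ × ℝ => (q.1 + q.2.1, q.2.2.1 + 2 * q.2.2.2))
      ((Measure.dirac x1).prod ((Measure.dirac x2).prod
        ((gaussianReal (3 * x1 + x2) 1).prod (gaussianReal x2 1))))
    = (Measure.dirac (x1 + x2)).prod (gaussianReal (3 * x1 + 3 * x2) 5) := by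
  have hf : Measurable (fun q : ℝ × ℝ × ℝ × ℝ => (q.1 + q.2.1, q.2.2.1 + 2 * q.2.2.2)) := by
    fun_prop
  have hh : Measurable (fun z : ℝ × ℝ => z.1 + 2 * z.2) := by fun_prop
  rw [Measure.dirac_prod, Measure.dirac_prod, Measure.map_map hf measurable_prodMk_left,
    Measure.map_map (hf.comp measurable_prodMk_left) measurable_prodMk_left]
  have hcomp : (((fun q : ℝ × ℝ × ℝ × ℝ => (q.1 + q.2.1, q.2.2.1 + 2 * q.2.2.2)) ∘
      Prod.mk x1) ∘ Prod.mk x2) = (Prod.mk (x1 + x2)) ∘ (fun z : ℝ × ℝ => z.1 + 2 * z.2) := rfl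
  rw [hcomp, ← Measure.map_map measurable_prodMk_left hh, ← Measure.dirac_prod]
  congr 1
  have hsplit : (fun z : ℝ × ℝ => z.1 + 2 * z.2)
      = (fun z : ℝ × ℝ => z.1 + z.2) ∘ Prod.map id (fun y : ℝ => 2 * y) := rfl
  rw [hsplit, ← Measure.map_map (g := fun z : ℝ × ℝ => z.1 + z.2) (measurable_fst.add measurable_snd)
      (measurable_id.prodMap (by fun_prop)),
    ← Measure.map_prod_map _ _ measurable_id (by fun_prop), Measure.map_id,
    gaussianReal_map_const_mul]
  have h4 : (NNReal.mk ((2:ℝ)^2) (sq_nonneg _)) * 1 = 4 := by ext; simp; norm_num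
  rw [h4, gaussian_conv]
  congr 1
  ring_nf

/-- Interventional consistency of the Gaussian abstraction on X-interventions:
with `f(x₁,x₂,y₁,y₂) = (x₁+x₂, y₁+2y₂)`, the pushforward along `f` of the causal kernel
`K_{X₁,X₂}((x₁,x₂,y₁,y₂), ·) = δ_{(x₁,x₂)} ⊗ N((3x₁+x₂, x₂), Id₂)` equals
`L_X(f(x₁,x₂,y₁,y₂), ·)` where `L_X((x,y), ·) = δ_x ⊗ N(3x, 5)`; both equal
`δ_{x₁+x₂} ⊗ N(3x₁+3x₂, 5)`. -/
theorem abstraction_interventional_consistency_X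
    (K : ℝ × ℝ × ℝ × ℝ → Measure (ℝ × ℝ × ℝ × ℝ))
    (hK : ∀ ω : ℝ × ℝ × ℝ × ℝ, K ω = (Measure.dirac ω.1).prod ((Measure.dirac ω.2.1).prod
        ((gaussianReal (3 * ω.1 + ω.2.1) 1).prod (gaussianReal ω.2.1 1))))
    (L : ℝ × ℝ → Measure (ℝ × ℝ))
    (hL : ∀ p : ℝ × ℝ, L p = (Measure.dirac p.1).prod (gaussianReal (3 * p.1) 5)) :
    ∀ ω : ℝ × ℝ × ℝ × ℝ,
      Measure.map (fun q : ℝ × ℝ × ℝ × ℝ => (q.1 + q.2.1, q.2.2.1 + 2 * q.2.2.2)) (K ω)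
          = L (ω.1 + ω.2.1, ω.2.2.1 + 2 * ω.2.2.2) ∧
      L (ω.1 + ω.2.1, ω.2.2.1 + 2 * ω.2.2.2)
          = (Measure.dirac (ω.1 + ω.2.1)).prod (gaussianReal (3 * ω.1 + 3 * ω.2.1) 5) := by
  intro ω
  have hLval : L (ω.1 + ω.2.1, ω.2.2.1 + 2 * ω.2.2.2)
      = (Measure.dirac (ω.1 + ω.2.1)).prod (gaussianReal (3 * ω.1 + 3 * ω.2.1) 5) := by
    rw [hL]
    congr 2
    ring_nf
  refine ⟨?_, hLval⟩
  rw [hLval, hK, main_map]
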